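/- For a one-dimensional simple random walk, the asymptotic constants in $\langle e^{-uh}\rangle_n^{+,\mathrm{simp}} \sim A_u n^{-1/6} \exp\{-\lambda_u n^{1/3}\}$ are given by applying the Laplace asymptotics to $4 e^{2u}(1-e^{-u}) \int_0^\infty x^{-1} \exp\{-(n\pi^2/(4x^2) + ux)\} dx$: explicitly, as $n \to \infty$, $\int_0^\infty x^{-1} \exp\left\{-\left(\frac{n\pi^2}{4x^2} + ux\right)\right\} dx \sim \frac{2^{2/3}\pi^{1/6} u^{-1/3}}{\sqrt{3}}\, n^{-1/6} \exp\left\{-2^{-4/3} \cdot 3 \cdot \pi^{2/3} u^{2/3} n^{1/3}\right\}$ for each fixed $u > 0$. -/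

import Mathlib

open Real Filter Topology MeasureTheory Set

noncomputable def lapF (u y₀ m t : ℝ) : ℝ :=
  if 0 < y₀ + t / Real.sqrt m then
    (y₀ + t / Real.sqrt m)⁻¹ *
      Real.exp (-(u * t ^ 2 * (y₀ + 2 * (y₀ + t / Real.sqrt m)) /
        (2 * (y₀ + t / Real.sqrt m) ^ 2)))
  else 0

noncomputable def lapG (u y₀ t : ℝ) : ℝ :=
  (2 / y₀ * Real.exp (u / (4 * y₀) * (y₀ / 2) ^ 2) + 2 / (y₀ * Real.sqrt (u * y₀))) *
      Real.exp (-(u / (4 * y₀)) * t ^ 2) +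
    (Set.Ioi (0 : ℝ)).indicator (fun s => y₀⁻¹ * Real.exp (u * y₀) * Real.exp (-u * s)) t

lemma lapF_nonneg (u y₀ m t : ℝ) : 0 ≤ lapF u y₀ m t := by
  unfold lapF; split_ifs with h
  · positivity
  · exact le_refl 0

lemma r_exp_bound {a r : ℝ} (ha : 0 < a) :
    r * Real.exp (-(a * r ^ 2)) ≤ 1 / (2 * Real.sqrt a) := by
  have hsa : 0 < Real.sqrt a := Real.sqrt_pos.mpr ha
  have hsq : Real.sqrt a ^ 2 = a := Real.sq_sqrt ha.le
  have h1 : 2 * Real.sqrt a * r ≤ Real.exp (a * r ^ 2) := by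
    nlinarith [Real.add_one_le_exp (a * r ^ 2), sq_nonneg (1 - Real.sqrt a * r)]
  have he : (0:ℝ) < Real.exp (-(a * r ^ 2)) := Real.exp_pos _
  have h2 : Real.exp (-(a * r ^ 2)) * Real.exp (a * r ^ 2) = 1 := by
    rw [← Real.exp_add]; simp
  calc r * Real.exp (-(a * r ^ 2))
      ≤ (Real.exp (a * r ^ 2) / (2 * Real.sqrt a)) * Real.exp (-(a * r ^ 2)) := by
        apply mul_le_mul_of_nonneg_right _ he.le
        rw [le_div_iff₀ (by positivity)]; linarith
    _ = 1 / (2 * Real.sqrt a) := by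
        rw [div_mul_eq_mul_div, mul_comm (Real.exp (a * r ^ 2)), h2]

set_option maxHeartbeats 1000000 in
lemma lapF_le_lapG {u y₀ : ℝ} (hu : 0 < u) (hy : 0 < y₀) {m : ℝ} (hm : 1 ≤ m) (t : ℝ) :
    ‖lapF u y₀ m t‖ ≤ lapG u y₀ t := by
  have hm0 : (0:ℝ) < m := lt_of_lt_of_le one_pos hm
  have hsm : 1 ≤ Real.sqrt m := by
    rw [show (1:ℝ) = Real.sqrt 1 by simp]; exact Real.sqrt_le_sqrt hm
  have hsm0 : (0:ℝ) < Real.sqrt m := lt_of_lt_of_le one_pos hsm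
  rw [Real.norm_eq_abs, abs_of_nonneg (lapF_nonneg _ _ _ _)]
  have hG2 : ∀ s, 0 ≤ (Set.Ioi (0:ℝ)).indicator
      (fun s => y₀⁻¹ * Real.exp (u * y₀) * Real.exp (-u * s)) s := fun s =>
    Set.indicator_nonneg (fun s _ => by positivity) s
  unfold lapF lapG
  split_ifs with hyp
  swap
  · exact add_nonneg (by positivity) (hG2 t)
  set c := u / (4 * y₀) with hc
  have hc0 : 0 < c := by rw [hc]; positivity
  set y := y₀ + t / Real.sqrt m with hydef
  clear_value y
  rcases le_or_gt t 0 with ht | ht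
  · -- t ≤ 0 : dominate by the Gaussian term
    have hts : t / Real.sqrt m ≤ 0 := by
      apply div_nonpos_of_nonpos_of_nonneg ht hsm0.le
    have hyy0 : y ≤ y₀ := by rw [hydef]; linarith
    have hty : y₀ + t ≤ y := by
      have h1 : t ≤ t / Real.sqrt m := by
        rw [le_div_iff₀ hsm0]; nlinarith
      rw [hydef]; linarith
    have key : y⁻¹ * Real.exp (-(u * t ^ 2 * (y₀ + 2 * y) / (2 * y ^ 2)))
        ≤ (2 / y₀ * Real.exp (c * (y₀ / 2) ^ 2) + 2 / (y₀ * Real.sqrt (u * y₀))) *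
          Real.exp (-c * t ^ 2) := by
      rcases le_or_gt (-(y₀ / 2)) t with h2 | h2
      · -- middle regime
        have hy2 : y₀ / 2 ≤ y := by linarith
        have e1 : Real.exp (-(u * t ^ 2 * (y₀ + 2 * y) / (2 * y ^ 2))) ≤ 1 := by
          rw [Real.exp_le_one_iff]
          have : 0 ≤ u * t ^ 2 * (y₀ + 2 * y) / (2 * y ^ 2) := by positivity
          linarith
        have e2 : y⁻¹ ≤ 2 / y₀ := by
          rw [inv_eq_one_div, div_le_div_iff₀ hyp hy]; linarith
        have ht2 : t ^ 2 ≤ (y₀ / 2) ^ 2 := by nlinarith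
        have h3 : (1:ℝ) ≤ Real.exp (c * (y₀ / 2) ^ 2) * Real.exp (-c * t ^ 2) := by
          rw [← Real.exp_add, ← Real.exp_zero]
          apply Real.exp_le_exp.mpr
          nlinarith [mul_le_mul_of_nonneg_left ht2 hc0.le]
        have hpos : (0:ℝ) < 2 / (y₀ * Real.sqrt (u * y₀)) := by positivity
        calc y⁻¹ * Real.exp (-(u * t ^ 2 * (y₀ + 2 * y) / (2 * y ^ 2)))
            ≤ (2 / y₀) * 1 :=
              mul_le_mul e2 e1 (Real.exp_pos _).le (by positivity)
          _ ≤ (2 / y₀) * (Real.exp (c * (y₀ / 2) ^ 2) * Real.exp (-c * t ^ 2)) :=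
              mul_le_mul_of_nonneg_left h3 (by positivity)
          _ = (2 / y₀ * Real.exp (c * (y₀ / 2) ^ 2)) * Real.exp (-c * t ^ 2) := by ring
          _ ≤ _ := by nlinarith [mul_pos hpos (Real.exp_pos (-c * t ^ 2))]
      · -- far left regime
        set a := u * y₀ / 4 with hadef
        have ha0 : 0 < a := by rw [hadef]; positivity
        set r := -t / y with hrdef
        clear_value r
        have hr0 : 0 < r := by rw [hrdef]; exact div_pos (by linarith) hyp
        have hr2 : r ^ 2 = t ^ 2 / y ^ 2 := by rw [hrdef, div_pow, neg_sq]
        have hE : a * r ^ 2 + c * t ^ 2 ≤ u * t ^ 2 * (y₀ + 2 * y) / (2 * y ^ 2) := by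
          rw [hr2, hc, hadef]
          have h9 : u * t ^ 2 * (y₀ + 2 * y) / (2 * y ^ 2) -
              (u * y₀ / 4 * (t ^ 2 / y ^ 2) + u / (4 * y₀) * t ^ 2)
              = u * t ^ 2 * (y₀ ^ 2 + 4 * y₀ * y - y ^ 2) / (4 * y₀ * y ^ 2) := by
            field_simp
            ring
          have h10 : (0:ℝ) ≤ u * t ^ 2 * (y₀ ^ 2 + 4 * y₀ * y - y ^ 2) / (4 * y₀ * y ^ 2) := by
            apply div_nonneg _ (by positivity)
            apply mul_nonneg (by positivity)
            nlinarith
          linarith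
        have e1 : Real.exp (-(u * t ^ 2 * (y₀ + 2 * y) / (2 * y ^ 2)))
            ≤ Real.exp (-(a * r ^ 2)) * Real.exp (-c * t ^ 2) := by
          rw [← Real.exp_add]
          apply Real.exp_le_exp.mpr
          linarith
        have e2 : y⁻¹ ≤ 2 / y₀ * r := by
          have h4 : y₀ / 2 ≤ -t := by linarith
          have h7 : (2 / y₀ * r) * y = 2 * (-t) / y₀ := by
            rw [hrdef]; field_simp
          rw [inv_eq_one_div, div_le_iff₀ hyp, h7, le_div_iff₀ hy]
          linarith
        have e3 : r * Real.exp (-(a * r ^ 2)) ≤ 1 / (2 * Real.sqrt a) :=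
          r_exp_bound ha0
        have hsa : Real.sqrt (u * y₀) = 2 * Real.sqrt a := by
          rw [show u * y₀ = 2 ^ 2 * a by rw [hadef]; ring,
            Real.sqrt_mul (by norm_num) a, Real.sqrt_sq (by norm_num)]
        have hC : (2 / y₀) * (1 / (2 * Real.sqrt a)) = 2 / (y₀ * Real.sqrt (u * y₀)) := by
          have : (0:ℝ) < Real.sqrt a := Real.sqrt_pos.mpr ha0
          rw [hsa]; field_simp; try ring
        calc y⁻¹ * Real.exp (-(u * t ^ 2 * (y₀ + 2 * y) / (2 * y ^ 2)))
            ≤ ((2 / y₀) * r) * (Real.exp (-(a * r ^ 2)) * Real.exp (-c * t ^ 2)) := by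
              apply mul_le_mul e2 e1 (Real.exp_pos _).le
              exact mul_nonneg (by positivity) hr0.le
          _ = ((2 / y₀) * (r * Real.exp (-(a * r ^ 2)))) * Real.exp (-c * t ^ 2) := by ring
          _ ≤ ((2 / y₀) * (1 / (2 * Real.sqrt a))) * Real.exp (-c * t ^ 2) := by
              apply mul_le_mul_of_nonneg_right _ (Real.exp_pos _).le
              exact mul_le_mul_of_nonneg_left e3 (by positivity)
          _ = (2 / (y₀ * Real.sqrt (u * y₀))) * Real.exp (-c * t ^ 2) := by rw [hC]
          _ ≤ _ := by
              have h8 : (0:ℝ) ≤ (2 / y₀ * Real.exp (c * (y₀ / 2) ^ 2)) *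
                  Real.exp (-c * t ^ 2) := by positivity
              nlinarith [h8]
    calc y⁻¹ * Real.exp (-(u * t ^ 2 * (y₀ + 2 * y) / (2 * y ^ 2)))
        ≤ (2 / y₀ * Real.exp (c * (y₀ / 2) ^ 2) + 2 / (y₀ * Real.sqrt (u * y₀))) *
          Real.exp (-c * t ^ 2) := key
      _ ≤ _ := le_add_of_nonneg_right (hG2 t)
  · -- t > 0 : dominate by the exponential term
    have hts : 0 < t / Real.sqrt m := div_pos ht hsm0
    have hy1 : y₀ < y := by rw [hydef]; linarith
    have hy2 : y ≤ y₀ + t := by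
      have : t / Real.sqrt m ≤ t := div_le_self ht.le hsm
      rw [hydef]; linarith
    have hE : u * t - u * y₀ ≤ u * t ^ 2 * (y₀ + 2 * y) / (2 * y ^ 2) := by
      rw [le_div_iff₀ (by positivity)]
      have a1 : (0:ℝ) ≤ u * t ^ 2 * y₀ := by positivity
      have a2 : (0:ℝ) ≤ u * y * (t - y) ^ 2 :=
        mul_nonneg (mul_nonneg hu.le hyp.le) (sq_nonneg _)
      have a3 : (0:ℝ) ≤ u * y ^ 2 * (y₀ - y + t) :=
        mul_nonneg (mul_nonneg hu.le (sq_nonneg _)) (by linarith)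
      nlinarith [a1, a2, a3]
    have e1 : Real.exp (-(u * t ^ 2 * (y₀ + 2 * y) / (2 * y ^ 2)))
        ≤ Real.exp (u * y₀) * Real.exp (-u * t) := by
      rw [← Real.exp_add]
      apply Real.exp_le_exp.mpr
      linarith
    have e2 : y⁻¹ ≤ y₀⁻¹ := by
      rw [inv_le_inv₀ (by linarith) hy]; linarith
    rw [Set.indicator_of_mem (Set.mem_Ioi.mpr ht)]
    have key : y⁻¹ * Real.exp (-(u * t ^ 2 * (y₀ + 2 * y) / (2 * y ^ 2)))
        ≤ y₀⁻¹ * Real.exp (u * y₀) * Real.exp (-u * t) := by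
      calc y⁻¹ * Real.exp (-(u * t ^ 2 * (y₀ + 2 * y) / (2 * y ^ 2)))
          ≤ y₀⁻¹ * (Real.exp (u * y₀) * Real.exp (-u * t)) :=
            mul_le_mul e2 e1 (Real.exp_pos _).le (by positivity)
        _ = y₀⁻¹ * Real.exp (u * y₀) * Real.exp (-u * t) := by ring
    have h1 : (0:ℝ) ≤ (2 / y₀ * Real.exp (c * (y₀ / 2) ^ 2) + 2 / (y₀ * Real.sqrt (u * y₀))) *
        Real.exp (-c * t ^ 2) := by positivity
    linarith

lemma lapF_meas (u y₀ m : ℝ) : Measurable (lapF u y₀ m) := by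
  unfold lapF
  apply Measurable.ite
  · exact measurableSet_lt measurable_const (by fun_prop)
  · fun_prop
  · fun_prop

lemma lapF_tendsto (u y₀ : ℝ) (hy : 0 < y₀) (t : ℝ) :
    Tendsto (fun m => lapF u y₀ m t) atTop
      (𝓝 (y₀⁻¹ * exp (-(3 * u / (2 * y₀)) * t ^ 2))) := by
  have hsq : Tendsto (fun m : ℝ => Real.sqrt m) atTop atTop := (tendsto_rpow_atTop (by norm_num : (0:ℝ) < 1/2)).congr
    (fun x => (Real.sqrt_eq_rpow x).symm)
  have h0 : Tendsto (fun m : ℝ => t / Real.sqrt m) atTop (𝓝 0) :=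
    tendsto_const_nhds.div_atTop hsq
  have h1 : Tendsto (fun m : ℝ => y₀ + t / Real.sqrt m) atTop (𝓝 y₀) := by
    simpa using tendsto_const_nhds.add h0
  have hev : ∀ᶠ m in atTop, 0 < y₀ + t / Real.sqrt m := h1.eventually_const_lt hy
  have h2 : Tendsto (fun m : ℝ => (y₀ + t / Real.sqrt m)⁻¹ *
      Real.exp (-(u * t ^ 2 * (y₀ + 2 * (y₀ + t / Real.sqrt m)) /
        (2 * (y₀ + t / Real.sqrt m) ^ 2)))) atTop
      (𝓝 (y₀⁻¹ * exp (-(u * t ^ 2 * (y₀ + 2 * y₀) / (2 * y₀ ^ 2))))) := by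
    refine (h1.inv₀ hy.ne').mul (Real.continuous_exp.continuousAt.tendsto.comp ?_)
    refine Tendsto.neg ?_
    exact (tendsto_const_nhds.mul (tendsto_const_nhds.add (tendsto_const_nhds.mul h1))).div
      (tendsto_const_nhds.mul (h1.pow 2)) (by positivity)
  have heq : (-(u * t ^ 2 * (y₀ + 2 * y₀) / (2 * y₀ ^ 2))) = -(3 * u / (2 * y₀)) * t ^ 2 := by
    field_simp; ring
  rw [heq] at h2
  refine h2.congr' ?_
  filter_upwards [hev] with m hm
  simp [lapF, hm]

lemma integral_comp_add_right_Ioi' (f : ℝ → ℝ) (a c : ℝ) :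
    ∫ x in Ioi a, f (x + c) = ∫ x in Ioi (a + c), f x := by
  rw [← integral_indicator measurableSet_Ioi, ← integral_indicator measurableSet_Ioi,
    ← integral_add_right_eq_self (fun x => (Ioi (a + c)).indicator f x) c]
  congr 1
  funext x
  simp only [indicator_apply, mem_Ioi, add_lt_add_iff_right]

lemma keyId {u y₀ : ℝ} (hy : 0 < y₀) (hkey : 2 * u * y₀ ^ 3 = π ^ 2)
    {y : ℝ} (hy' : y ≠ 0) :
    π ^ 2 / (4 * y ^ 2) + u * y - 3 / 2 * u * y₀
      = u * (y - y₀) ^ 2 * (y₀ + 2 * y) / (2 * y ^ 2) := by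
  rw [← hkey]
  field_simp
  ring

set_option maxHeartbeats 800000 in
lemma lap_integral_eq {u y₀ : ℝ} (hu : 0 < u) (hy : 0 < y₀)
    (hkey : 2 * u * y₀ ^ 3 = π ^ 2) {n : ℝ} (hn : 1 ≤ n) :
    ∫ x in Ioi (0:ℝ), x⁻¹ * exp (-(n * π ^ 2 / (4 * x ^ 2) + u * x))
      = Real.exp (-(n ^ ((1:ℝ)/3) * (3 / 2 * u * y₀))) * (Real.sqrt (n ^ ((1:ℝ)/3)))⁻¹ *
        ∫ t, lapF u y₀ (n ^ ((1:ℝ)/3)) t := by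
  have hn0 : (0:ℝ) < n := lt_of_lt_of_le one_pos hn
  set m := n ^ ((1:ℝ)/3) with hmdef
  have hm0 : (0:ℝ) < m := Real.rpow_pos_of_pos hn0 _
  have hn3 : n = m ^ 3 := by
    rw [hmdef, ← Real.rpow_natCast (n ^ ((1:ℝ)/3)) 3, ← Real.rpow_mul hn0.le]
    norm_num
  have hsm0 : (0:ℝ) < Real.sqrt m := Real.sqrt_pos.mpr hm0
  have hsq : Real.sqrt m ^ 2 = m := Real.sq_sqrt hm0.le
  -- Step 1: x = m * y
  have step1 : ∫ x in Ioi (0:ℝ), x⁻¹ * exp (-(n * π ^ 2 / (4 * x ^ 2) + u * x))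
      = ∫ y in Ioi (0:ℝ), y⁻¹ * exp (-(m * (π ^ 2 / (4 * y ^ 2) + u * y))) := by
    have h := integral_comp_mul_left_Ioi
      (fun x => x⁻¹ * exp (-(n * π ^ 2 / (4 * x ^ 2) + u * x))) 0 hm0
    rw [mul_zero, smul_eq_mul] at h
    have h' : ∫ x in Ioi (0:ℝ), x⁻¹ * exp (-(n * π ^ 2 / (4 * x ^ 2) + u * x))
        = m * ∫ y in Ioi (0:ℝ),
            (fun x => x⁻¹ * exp (-(n * π ^ 2 / (4 * x ^ 2) + u * x))) (m * y) := by
      rw [h, ← mul_assoc, mul_inv_cancel₀ hm0.ne', one_mul]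
    rw [h', ← integral_const_mul]
    apply setIntegral_congr_fun measurableSet_Ioi
    intro y hy'
    simp only [mem_Ioi] at hy'
    have hmy : (0:ℝ) < m * y := mul_pos hm0 hy'
    have e1 : m * (m * y)⁻¹ = y⁻¹ := by
      rw [mul_inv]; field_simp
    have e2 : -(n * π ^ 2 / (4 * (m * y) ^ 2) + u * (m * y))
        = -(m * (π ^ 2 / (4 * y ^ 2) + u * y)) := by
      rw [hn3]; field_simp
    simp only
    rw [← mul_assoc, e1, e2]
  -- Step 2: subtract the value at the minimum
  have step2 : ∫ y in Ioi (0:ℝ), y⁻¹ * exp (-(m * (π ^ 2 / (4 * y ^ 2) + u * y)))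
      = Real.exp (-(m * (3 / 2 * u * y₀))) * ∫ y in Ioi (0:ℝ),
          y⁻¹ * exp (-(m * (u * (y - y₀) ^ 2 * (y₀ + 2 * y) / (2 * y ^ 2)))) := by
    rw [← integral_const_mul]
    apply setIntegral_congr_fun measurableSet_Ioi
    intro y hy'
    simp only [mem_Ioi] at hy'
    have hid := keyId hy hkey hy'.ne'
    have e3 : -(m * (π ^ 2 / (4 * y ^ 2) + u * y))
        = -(m * (3 / 2 * u * y₀)) + -(m * (u * (y - y₀) ^ 2 * (y₀ + 2 * y) / (2 * y ^ 2))) := by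
      have : π ^ 2 / (4 * y ^ 2) + u * y
          = 3 / 2 * u * y₀ + u * (y - y₀) ^ 2 * (y₀ + 2 * y) / (2 * y ^ 2) := by linarith
      rw [this]; ring
    show y⁻¹ * exp (-(m * (π ^ 2 / (4 * y ^ 2) + u * y)))
        = exp (-(m * (3 / 2 * u * y₀))) *
          (y⁻¹ * exp (-(m * (u * (y - y₀) ^ 2 * (y₀ + 2 * y) / (2 * y ^ 2)))))
    rw [e3, Real.exp_add]; ring
  -- Step 3: y = y₀ + t / √m
  set H : ℝ → ℝ := fun y => y⁻¹ * exp (-(m * (u * (y - y₀) ^ 2 * (y₀ + 2 * y) / (2 * y ^ 2))))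
    with hHdef
  have step3 : ∫ y in Ioi (0:ℝ), H y = (Real.sqrt m)⁻¹ * ∫ s in Ioi (0:ℝ), H ((Real.sqrt m)⁻¹ * s) := by
    have h := integral_comp_mul_left_Ioi H 0 (inv_pos.mpr hsm0)
    rw [mul_zero, smul_eq_mul, inv_inv] at h
    rw [h, ← mul_assoc, inv_mul_cancel₀ hsm0.ne', one_mul]
  have step4 : ∫ s in Ioi (0:ℝ), H ((Real.sqrt m)⁻¹ * s)
      = ∫ t in Ioi (-(y₀ * Real.sqrt m)), H ((Real.sqrt m)⁻¹ * (t + y₀ * Real.sqrt m)) := by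
    rw [integral_comp_add_right_Ioi' (fun s => H ((Real.sqrt m)⁻¹ * s)) (-(y₀ * Real.sqrt m))
      (y₀ * Real.sqrt m), neg_add_cancel]
  have step5 : ∫ t in Ioi (-(y₀ * Real.sqrt m)), H ((Real.sqrt m)⁻¹ * (t + y₀ * Real.sqrt m))
      = ∫ t, lapF u y₀ m t := by
    rw [← integral_indicator measurableSet_Ioi]
    congr 1
    funext t
    have harg : (Real.sqrt m)⁻¹ * (t + y₀ * Real.sqrt m) = y₀ + t / Real.sqrt m := by
      field_simp; ring
    have hcond : t ∈ Ioi (-(y₀ * Real.sqrt m)) ↔ 0 < y₀ + t / Real.sqrt m := by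
      rw [mem_Ioi, show -(y₀ * Real.sqrt m) = (-y₀) * Real.sqrt m by ring,
        ← lt_div_iff₀ hsm0]
      constructor <;> intro h <;> linarith
    by_cases hmem : t ∈ Ioi (-(y₀ * Real.sqrt m))
    · rw [indicator_of_mem hmem, harg]
      have hyp : 0 < y₀ + t / Real.sqrt m := hcond.mp hmem
      unfold lapF
      rw [if_pos hyp, hHdef]
      simp only
      have h1 : y₀ + t / Real.sqrt m - y₀ = t / Real.sqrt m := by ring
      have h2 : (t / Real.sqrt m) ^ 2 = t ^ 2 / m := by rw [div_pow, hsq]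
      rw [h1, h2]
      congr 1
      have e : m * (u * (t ^ 2 / m)) = u * t ^ 2 := by
        field_simp
      rw [show m * (u * (t ^ 2 / m) * (y₀ + 2 * (y₀ + t / Real.sqrt m)) /
          (2 * (y₀ + t / Real.sqrt m) ^ 2))
          = m * (u * (t ^ 2 / m)) * (y₀ + 2 * (y₀ + t / Real.sqrt m)) /
          (2 * (y₀ + t / Real.sqrt m) ^ 2) by ring, e]
    · rw [indicator_of_notMem hmem]
      unfold lapF
      rw [if_neg (fun hyp => hmem (hcond.mpr hyp))]
  rw [step1, step2, step3, step4, step5]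
  ring

lemma const_eq {u : ℝ} (hu : 0 < u) :
    (2:ℝ) ^ ((2:ℝ)/3) * π ^ ((1:ℝ)/6) * u ^ (-(1:ℝ)/3) / Real.sqrt 3
      = ((π^2/(2*u)) ^ ((1:ℝ)/3))⁻¹ *
        Real.sqrt (π / (3*u/(2*((π^2/(2*u)) ^ ((1:ℝ)/3))))) := by
  have hπ : 0 < π := pi_pos
  set y₀ := (π^2/(2*u)) ^ ((1:ℝ)/3) with hy₀
  have hy : 0 < y₀ := Real.rpow_pos_of_pos (by positivity) _
  have hA : 0 < (2:ℝ)^((2:ℝ)/3) * π^((1:ℝ)/6) * u^(-(1:ℝ)/3) / Real.sqrt 3 := by positivity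
  have harg : 0 < π / (3*u/(2*y₀)) := div_pos hπ (div_pos (by linarith) (by linarith))
  have hB : 0 < y₀⁻¹ * Real.sqrt (π/(3*u/(2*y₀))) :=
    mul_pos (inv_pos.mpr hy) (Real.sqrt_pos.mpr harg)
  rw [← Real.exp_log hA, ← Real.exp_log hB]
  congr 1
  have hly : Real.log y₀ = (2 * Real.log π - (Real.log 2 + Real.log u)) / 3 := by
    rw [hy₀, Real.log_rpow (by positivity), Real.log_div (by positivity) (by positivity),
      Real.log_pow, Real.log_mul (by norm_num) hu.ne']
    push_cast; ring
  rw [Real.log_div (by positivity) (by positivity),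
    Real.log_mul (by positivity) (by positivity),
    Real.log_mul (by positivity) (by positivity),
    Real.log_rpow two_pos, Real.log_rpow hπ, Real.log_rpow hu,
    Real.log_sqrt (by norm_num),
    Real.log_mul (by positivity) (Real.sqrt_pos.mpr harg).ne',
    Real.log_inv, Real.log_sqrt harg.le,
    Real.log_div hπ.ne' (by positivity),
    Real.log_div (by positivity) (by positivity),
    Real.log_mul (by norm_num) hu.ne', Real.log_mul (by norm_num) hy.ne']
  rw [hly]; ring

lemma lam_eq {u : ℝ} (hu : 0 < u) :
    (2:ℝ) ^ (-(4:ℝ)/3) * 3 * π ^ ((2:ℝ)/3) * u ^ ((2:ℝ)/3)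
      = 3/2 * u * ((π^2/(2*u)) ^ ((1:ℝ)/3)) := by
  have hπ : 0 < π := pi_pos
  set y₀ := (π^2/(2*u)) ^ ((1:ℝ)/3) with hy₀
  have hy : 0 < y₀ := Real.rpow_pos_of_pos (by positivity) _
  have hA : 0 < (2:ℝ) ^ (-(4:ℝ)/3) * 3 * π ^ ((2:ℝ)/3) * u ^ ((2:ℝ)/3) := by positivity
  have hB : 0 < 3/2 * u * y₀ := by positivity
  rw [← Real.exp_log hA, ← Real.exp_log hB]
  congr 1
  have hly : Real.log y₀ = (2 * Real.log π - (Real.log 2 + Real.log u)) / 3 := by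
    rw [hy₀, Real.log_rpow (by positivity), Real.log_div (by positivity) (by positivity),
      Real.log_pow, Real.log_mul (by norm_num) hu.ne']
    push_cast; ring
  have h2 : ((2:ℝ) ^ (-(4:ℝ)/3)) ≠ 0 := (Real.rpow_pos_of_pos two_pos _).ne'
  have hπb : (π ^ ((2:ℝ)/3)) ≠ 0 := (Real.rpow_pos_of_pos hπ _).ne'
  have huc : (u ^ ((2:ℝ)/3)) ≠ 0 := (Real.rpow_pos_of_pos hu _).ne'
  have h3 : (3:ℝ) ≠ 0 := by norm_num
  rw [Real.log_mul (mul_ne_zero (mul_ne_zero h2 h3) hπb) huc,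
    Real.log_mul (mul_ne_zero h2 h3) hπb, Real.log_mul h2 h3,
    Real.log_rpow two_pos, Real.log_rpow hπ, Real.log_rpow hu,
    Real.log_mul (mul_ne_zero (by norm_num : (3/2:ℝ) ≠ 0) hu.ne') hy.ne',
    Real.log_mul (by norm_num : (3/2:ℝ) ≠ 0) hu.ne',
    Real.log_div h3 (by norm_num : (2:ℝ) ≠ 0), hly]
  ring

lemma key_rel {u : ℝ} (hu : 0 < u) :
    2 * u * ((π^2/(2*u)) ^ ((1:ℝ)/3)) ^ 3 = π ^ 2 := by
  have h : ((π^2/(2*u)) ^ ((1:ℝ)/3)) ^ 3 = π^2/(2*u) := by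
    rw [← Real.rpow_natCast ((π^2/(2*u)) ^ ((1:ℝ)/3)) 3, ← Real.rpow_mul (by positivity)]
    norm_num
  rw [h]; field_simp

lemma lapG_integrable {u y₀ : ℝ} (hu : 0 < u) (hy : 0 < y₀) : Integrable (lapG u y₀) := by
  unfold lapG
  apply Integrable.add
  · exact (integrable_exp_neg_mul_sq (by positivity)).const_mul _
  · exact MeasureTheory.IntegrableOn.integrable_indicator
      ((exp_neg_integrableOn_Ioi 0 hu).const_mul _) measurableSet_Ioi

lemma lap_tendsto_integral {u y₀ : ℝ} (hu : 0 < u) (hy : 0 < y₀) :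
    Tendsto (fun m => ∫ t, lapF u y₀ m t) atTop
      (𝓝 (y₀⁻¹ * Real.sqrt (π / (3 * u / (2 * y₀))))) := by
  have h := tendsto_integral_filter_of_dominated_convergence (μ := volume)
    (F := lapF u y₀) (f := fun t => y₀⁻¹ * exp (-(3 * u / (2 * y₀)) * t ^ 2))
    (lapG u y₀)
    (Eventually.of_forall fun m => (lapF_meas u y₀ m).aestronglyMeasurable)
    (by filter_upwards [eventually_ge_atTop (1:ℝ)] with m hm
        exact ae_of_all _ (lapF_le_lapG hu hy hm))
    (lapG_integrable hu hy)
    (ae_of_all _ (lapF_tendsto u y₀ hy))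
  rwa [integral_const_mul, integral_gaussian] at h


/-- Explicit Laplace asymptotics for the simple random walk: for each fixed `u > 0`,
as `n → ∞`,
`∫_0^∞ x⁻¹ exp{-(nπ²/(4x²) + ux)} dx
  ∼ (2^{2/3} π^{1/6} u^{-1/3}/√3) n^{-1/6} exp{-2^{-4/3}·3·π^{2/3} u^{2/3} n^{1/3}}`. -/
theorem rw_integral_asymptotics (u : ℝ) (hu : 0 < u) :
    Tendsto (fun n : ℝ =>
        (∫ x in Set.Ioi (0 : ℝ), x⁻¹ * exp (-(n * π ^ 2 / (4 * x ^ 2) + u * x))) /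
        ((2 : ℝ) ^ ((2 : ℝ) / 3) * π ^ ((1 : ℝ) / 6) * u ^ (-(1 : ℝ) / 3) / Real.sqrt 3 *
          n ^ (-(1 : ℝ) / 6) *
          exp (-((2 : ℝ) ^ (-(4 : ℝ) / 3) * 3 * π ^ ((2 : ℝ) / 3) * u ^ ((2 : ℝ) / 3) *
            n ^ ((1 : ℝ) / 3)))))
      atTop (𝓝 1) := by
  have hπ : 0 < π := pi_pos
  set y₀ := (π ^ 2 / (2 * u)) ^ ((1:ℝ)/3) with hy₀
  have hy : 0 < y₀ := Real.rpow_pos_of_pos (by positivity) _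
  have hkey : 2 * u * y₀ ^ 3 = π ^ 2 := key_rel hu
  set L := y₀⁻¹ * Real.sqrt (π / (3 * u / (2 * y₀))) with hL
  have harg : 0 < π / (3 * u / (2 * y₀)) := div_pos hπ (div_pos (by linarith) (by linarith))
  have hL0 : 0 < L := mul_pos (inv_pos.mpr hy) (Real.sqrt_pos.mpr harg)
  have hcomp : Tendsto (fun n : ℝ => n ^ ((1:ℝ)/3)) atTop atTop :=
    tendsto_rpow_atTop (by norm_num)
  have h2 : Tendsto (fun n : ℝ => ∫ t, lapF u y₀ (n ^ ((1:ℝ)/3)) t) atTop (𝓝 L) :=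
    (lap_tendsto_integral hu hy).comp hcomp
  have h3 : Tendsto (fun n : ℝ => (∫ t, lapF u y₀ (n ^ ((1:ℝ)/3)) t) / L) atTop (𝓝 (L / L)) :=
    h2.div_const L
  rw [div_self hL0.ne'] at h3
  refine h3.congr' ?_
  filter_upwards [eventually_ge_atTop (1:ℝ)] with n hn
  have hn0 : (0:ℝ) < n := lt_of_lt_of_le one_pos hn
  have hm0 : (0:ℝ) < n ^ ((1:ℝ)/3) := Real.rpow_pos_of_pos hn0 _
  have hsm0 : (0:ℝ) < Real.sqrt (n ^ ((1:ℝ)/3)) := Real.sqrt_pos.mpr hm0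
  have hE0 : (0:ℝ) < Real.exp (-(n ^ ((1:ℝ)/3) * (3 / 2 * u * y₀))) := Real.exp_pos _
  have hsqm : Real.sqrt (n ^ ((1:ℝ)/3)) = n ^ ((1:ℝ)/6) := by
    rw [Real.sqrt_eq_rpow, ← Real.rpow_mul hn0.le]; norm_num
  have hexp6 : n ^ (-(1:ℝ)/6) = (Real.sqrt (n ^ ((1:ℝ)/3)))⁻¹ := by
    rw [hsqm, show (-(1:ℝ))/6 = -((1:ℝ)/6) by norm_num, Real.rpow_neg hn0.le]
  have hlam : (2:ℝ) ^ (-(4:ℝ)/3) * 3 * π ^ ((2:ℝ)/3) * u ^ ((2:ℝ)/3) * n ^ ((1:ℝ)/3)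
      = n ^ ((1:ℝ)/3) * (3/2 * u * y₀) := by
    rw [lam_eq hu, ← hy₀]; ring
  symm
  show (∫ x in Set.Ioi (0 : ℝ), x⁻¹ * exp (-(n * π ^ 2 / (4 * x ^ 2) + u * x))) /
        ((2 : ℝ) ^ ((2 : ℝ) / 3) * π ^ ((1 : ℝ) / 6) * u ^ (-(1 : ℝ) / 3) / Real.sqrt 3 *
          n ^ (-(1 : ℝ) / 6) *
          exp (-((2 : ℝ) ^ (-(4 : ℝ) / 3) * 3 * π ^ ((2 : ℝ) / 3) * u ^ ((2 : ℝ) / 3) *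
            n ^ ((1 : ℝ) / 3))))
      = (∫ t, lapF u y₀ (n ^ ((1:ℝ)/3)) t) / L
  rw [lap_integral_eq hu hy hkey hn, const_eq hu, ← hy₀, ← hL, hexp6, hlam]
  rw [div_eq_div_iff (by positivity) hL0.ne']
  ring
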